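/- Let k ≥ 2 models have true mean gaps Δ_{ij} ≠ 0 for all pairs i < j, and let two independent benchmarks of size N produce i.i.d. Gaussian gap statistics Y_{ij}, Y'_{ij} ~ N(Δ_{ij}, 2σ²/N), independent across the two benchmarks. Then the expected Kendall-τ correlation τ_{N,N} = (2/(k(k−1))) Σ_{i<j} sgn(Y_{ij}) sgn(Y'_{ij}) satisfies E[τ_{N,N}] = (2/(k(k−1))) Σ_{i<j} erf²(|Δ_{ij}|√N / (2σ)). -/

import Mathlib

open MeasureTheory ProbabilityTheory

/-- The Gauss error function `erf x = (2/√π) ∫₀ˣ e^{-t²} dt`. -/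
noncomputable def erf (x : ℝ) : ℝ :=
  (2 / Real.sqrt Real.pi) * ∫ t in (0:ℝ)..x, Real.exp (-t ^ 2)

open Set Real
open scoped NNReal

lemma sign_eq_indicator (x : ℝ) :
    Real.sign x = (Ioi (0:ℝ)).indicator 1 x - (Iio (0:ℝ)).indicator 1 x := by
  rcases lt_trichotomy x 0 with h | h | h
  · simp [Real.sign_of_neg h, Set.indicator_apply, h, not_lt.mpr h.le, h.not_gt]
  · simp [h]
  · simp [Real.sign_of_pos h, Set.indicator_apply, h, not_lt.mpr h.le]

lemma measurable_sign' : Measurable Real.sign := by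
  have : Real.sign = fun x => (Ioi (0:ℝ)).indicator 1 x - (Iio (0:ℝ)).indicator 1 x := by
    funext x; exact sign_eq_indicator x
  rw [this]
  exact ((measurable_const.indicator measurableSet_Ioi).sub
    (measurable_const.indicator measurableSet_Iio))

lemma abs_sign_le_one (x : ℝ) : |Real.sign x| ≤ 1 := by
  rcases lt_trichotomy x 0 with h | h | h
  · simp [Real.sign_of_neg h]
  · simp [h]
  · simp [Real.sign_of_pos h]

lemma integrable_exp_neg_sq : Integrable (fun t : ℝ => Real.exp (-t ^ 2)) := by
  have := integrable_exp_neg_mul_sq (b := 1) one_pos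
  simpa using this

/-- substitution: `∫ x, f ((x - m)/c) = |c| * ∫ f`. -/
lemma integral_comp_sub_div (f : ℝ → ℝ) (m c : ℝ) :
    (∫ x : ℝ, f ((x - m) / c)) = |c| * ∫ t : ℝ, f t := by
  have h1 : (∫ x : ℝ, (fun y : ℝ => f (y / c)) (x - m)) = ∫ x : ℝ, f (x / c) :=
    integral_sub_right_eq_self (fun y : ℝ => f (y / c)) m
  have h2 : (∫ x : ℝ, f (x / c)) = |c| • ∫ t : ℝ, f t :=
    MeasureTheory.Measure.integral_comp_div f c
  simpa [smul_eq_mul] using h1.trans h2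

lemma gauss_Iic (m : ℝ) (v : ℝ≥0) (hv : 0 < (v:ℝ)) (b : ℝ) :
    ∫ x in Iic b, gaussianPDFReal m v x
      = (Real.sqrt π)⁻¹ *
        ∫ t in Iic ((b - m) / Real.sqrt (2 * v)), Real.exp (-t ^ 2) := by
  set c : ℝ := Real.sqrt (2 * v) with hc
  have hcpos : 0 < c := Real.sqrt_pos.mpr (by positivity)
  have hcsq : c ^ 2 = 2 * v := Real.sq_sqrt (by positivity)
  have key : ∀ x : ℝ, (Iic b).indicator (gaussianPDFReal m v) x
      = (Real.sqrt (2 * π * v))⁻¹ *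
        (Iic ((b - m) / c)).indicator (fun t => Real.exp (-t ^ 2)) ((x - m) / c) := by
    intro x
    have hmem : x ∈ Iic b ↔ (x - m) / c ∈ Iic ((b - m) / c) := by
      simp only [mem_Iic]
      rw [div_le_div_iff_of_pos_right hcpos, sub_le_sub_iff_right]
    have hpdf : gaussianPDFReal m v x
        = (Real.sqrt (2 * π * v))⁻¹ * Real.exp (-(((x - m) / c) ^ 2)) := by
      rw [gaussianPDFReal]
      congr 1
      rw [div_pow, hcsq]
      ring_nf
    by_cases hx : x ∈ Iic b
    · rw [Set.indicator_of_mem hx, Set.indicator_of_mem (hmem.mp hx), hpdf]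
    · rw [Set.indicator_of_notMem hx,
        Set.indicator_of_notMem (fun h => hx (hmem.mpr h)), mul_zero]
  have hsqrt : Real.sqrt (2 * π * v) = Real.sqrt π * c := by
    rw [hc, ← Real.sqrt_mul Real.pi_pos.le]
    congr 1
    ring
  calc ∫ x in Iic b, gaussianPDFReal m v x
      = ∫ x : ℝ, (Iic b).indicator (gaussianPDFReal m v) x := by
        rw [integral_indicator measurableSet_Iic]
    _ = ∫ x : ℝ, (Real.sqrt (2 * π * v))⁻¹ *
          (Iic ((b - m) / c)).indicator (fun t => Real.exp (-t ^ 2)) ((x - m) / c) := by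
        simp_rw [key]
    _ = (Real.sqrt (2 * π * v))⁻¹ *
          ∫ x : ℝ, (Iic ((b - m) / c)).indicator (fun t => Real.exp (-t ^ 2)) ((x - m) / c) := by
        rw [integral_const_mul]
    _ = (Real.sqrt (2 * π * v))⁻¹ * (|c| *
          ∫ t : ℝ, (Iic ((b - m) / c)).indicator (fun t => Real.exp (-t ^ 2)) t) := by
        rw [integral_comp_sub_div]
    _ = (Real.sqrt π)⁻¹ * ∫ t in Iic ((b - m) / c), Real.exp (-t ^ 2) := by
        rw [integral_indicator measurableSet_Iic, abs_of_pos hcpos, hsqrt, mul_inv]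
        have : (Real.sqrt π)⁻¹ * c⁻¹ * c = (Real.sqrt π)⁻¹ := by
          rw [mul_assoc, inv_mul_cancel₀ hcpos.ne', mul_one]
        rw [← mul_assoc, this]

lemma Iic_zero_exp : (∫ t in Iic (0:ℝ), Real.exp (-t ^ 2)) = Real.sqrt π / 2 := by
  have htot : (∫ t : ℝ, Real.exp (-t ^ 2)) = Real.sqrt π := by
    have := integral_gaussian 1
    simpa using this
  have hIoi : (∫ t in Ioi (0:ℝ), Real.exp (-t ^ 2)) = Real.sqrt π / 2 := by
    have := integral_gaussian_Ioi 1
    simpa using this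
  have hsplit := integral_add_compl (measurableSet_Ioi (a := (0:ℝ)))
    integrable_exp_neg_sq
  rw [Set.compl_Ioi] at hsplit
  have : (∫ t in Ioi (0:ℝ), Real.exp (-t ^ 2)) + (∫ t in Iic (0:ℝ), Real.exp (-t ^ 2))
      = Real.sqrt π := by rw [hsplit, htot]
  linarith [hIoi ▸ this]

/-- The expectation of the sign of a nondegenerate Gaussian. -/
lemma integral_sign_gaussian (m : ℝ) (v : ℝ≥0) (hv : 0 < (v:ℝ)) :
    (∫ x, Real.sign x ∂(gaussianReal m v)) = erf (m / Real.sqrt (2 * v)) := by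
  have hv' : v ≠ 0 := by exact_mod_cast hv.ne'
  set ν := gaussianReal m v with hν
  have hprob : IsProbabilityMeasure ν := by rw [hν]; infer_instance
  set c : ℝ := Real.sqrt (2 * v) with hc
  have hcpos : 0 < c := Real.sqrt_pos.mpr (by positivity)
  -- measures of half lines
  have happly : ∀ s : Set ℝ, MeasurableSet s → (ν s).toReal = ∫ x in s, gaussianPDFReal m v x := by
    intro s hs
    rw [hν, gaussianReal_apply_eq_integral m hv' s,
      ENNReal.toReal_ofReal (integral_nonneg (fun x => gaussianPDFReal_nonneg m v x))]
  -- integral of sign as difference of measures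
  have hsign : (∫ x, Real.sign x ∂ν)
      = (ν (Ioi 0)).toReal - (ν (Iio 0)).toReal := by
    calc (∫ x, Real.sign x ∂ν)
        = ∫ x, ((Ioi (0:ℝ)).indicator 1 x - (Iio (0:ℝ)).indicator 1 x) ∂ν := by
          refine integral_congr_ae (Filter.Eventually.of_forall fun x => ?_)
          exact sign_eq_indicator x
      _ = (∫ x, (Ioi (0:ℝ)).indicator 1 x ∂ν) - ∫ x, (Iio (0:ℝ)).indicator 1 x ∂ν := by
          refine integral_sub ?_ ?_
          · exact (integrable_const (1:ℝ)).indicator measurableSet_Ioi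
          · exact (integrable_const (1:ℝ)).indicator measurableSet_Iio
      _ = (ν (Ioi 0)).toReal - (ν (Iio 0)).toReal := by
          rw [integral_indicator_one measurableSet_Ioi,
            integral_indicator_one measurableSet_Iio]
          rfl
  -- reduce to Iic 0
  have hIio : (ν (Iio 0)).toReal = ∫ x in Iic (0:ℝ), gaussianPDFReal m v x := by
    rw [happly _ measurableSet_Iio]
    exact setIntegral_congr_set Iio_ae_eq_Iic
  have hIoi : (ν (Ioi 0)).toReal = 1 - ∫ x in Iic (0:ℝ), gaussianPDFReal m v x := by
    have hcompl : ν (Ioi 0) = 1 - ν (Iic 0) := by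
      rw [← Set.compl_Iic, measure_compl measurableSet_Iic (measure_ne_top ν _),
        measure_univ]
    rw [hcompl, ENNReal.toReal_sub_of_le (prob_le_one) (by simp), ENNReal.toReal_one,
      happly _ measurableSet_Iic]
  -- the Iic integral via substitution
  have hIic : (∫ x in Iic (0:ℝ), gaussianPDFReal m v x)
      = (Real.sqrt π)⁻¹ * ∫ t in Iic (-(m / c)), Real.exp (-t ^ 2) := by
    have := gauss_Iic m v hv 0
    rw [this, zero_sub, neg_div]
  -- put together
  rw [hsign, hIio, hIoi, hIic]
  -- now express erf
  have hint : IntegrableOn (fun t : ℝ => Real.exp (-t ^ 2)) (Iic (-(m/c))) volume :=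
    integrable_exp_neg_sq.integrableOn
  have hint0 : IntegrableOn (fun t : ℝ => Real.exp (-t ^ 2)) (Iic (0:ℝ)) volume :=
    integrable_exp_neg_sq.integrableOn
  have herf : erf (m / c)
      = (2 / Real.sqrt π) * ((∫ t in Iic (0:ℝ), Real.exp (-t ^ 2))
          - ∫ t in Iic (-(m/c)), Real.exp (-t ^ 2)) := by
    rw [erf]
    congr 1
    have hrefl : (∫ t in (0:ℝ)..(m/c), Real.exp (-t ^ 2))
        = ∫ t in (-(m/c))..(0:ℝ), Real.exp (-t ^ 2) := by
      have := intervalIntegral.integral_comp_neg (a := (0:ℝ)) (b := m/c)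
        (fun t => Real.exp (-t ^ 2))
      simpa using this
    rw [hrefl, intervalIntegral.integral_Iic_sub_Iic hint hint0]
  rw [herf, Iic_zero_exp]
  have hπ : (0:ℝ) < Real.sqrt π := Real.sqrt_pos.mpr Real.pi_pos
  field_simp
  ring

lemma erf_neg (x : ℝ) : erf (-x) = -erf x := by
  unfold erf
  rw [← mul_neg]
  congr 1
  have h1 : (∫ t in (0:ℝ)..x, Real.exp (-(-t) ^ 2))
      = ∫ t in (-x)..(-(0:ℝ)), Real.exp (-t ^ 2) :=
    intervalIntegral.integral_comp_neg (a := (0:ℝ)) (b := x) (fun t => Real.exp (-t ^ 2))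
  simp only [neg_sq, neg_zero] at h1
  have h2 : (∫ t in (-x)..(0:ℝ), Real.exp (-t ^ 2))
      = -∫ t in (0:ℝ)..(-x), Real.exp (-t ^ 2) :=
    intervalIntegral.integral_symm 0 (-x)
  linarith [h1, h2]

lemma erf_mul_self_abs (x : ℝ) : erf x * erf x = erf |x| ^ 2 := by
  rcases le_or_gt 0 x with h | h
  · rw [abs_of_nonneg h, sq]
  · rw [abs_of_neg h, erf_neg]
    ring

/-- Expected Kendall-τ between two independent benchmarks of size `N`:
`E[τ_{N,N}] = (2/(k(k−1))) Σ_{i<j} erf²(|Δ_{ij}|√N/(2σ))`. -/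
theorem expected_kendall_tau_two_benchmarks
    {Ω : Type*} [MeasurableSpace Ω] (μ : Measure Ω) [IsProbabilityMeasure μ]
    (k : ℕ) (hk : 2 ≤ k) (N : ℕ) (hN : 1 ≤ N) (σ : ℝ) (hσ : 0 < σ)
    (Δ : Fin k → Fin k → ℝ) (hΔ : ∀ i j : Fin k, i < j → Δ i j ≠ 0)
    (Y Y' : Fin k → Fin k → Ω → ℝ)
    (hYmeas : ∀ i j : Fin k, Measurable (Y i j))
    (hY'meas : ∀ i j : Fin k, Measurable (Y' i j))
    (hY : ∀ i j : Fin k, i < j →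
      Measure.map (Y i j) μ = gaussianReal (Δ i j) (Real.toNNReal (2 * σ ^ 2 / N)))
    (hY' : ∀ i j : Fin k, i < j →
      Measure.map (Y' i j) μ = gaussianReal (Δ i j) (Real.toNNReal (2 * σ ^ 2 / N)))
    (hindep : ∀ i j : Fin k, i < j → IndepFun (Y i j) (Y' i j) μ) :
    ∫ ω, (2 / ((k : ℝ) * ((k : ℝ) - 1))) *
        ∑ p ∈ Finset.univ.filter (fun p : Fin k × Fin k => p.1 < p.2),
          Real.sign (Y p.1 p.2 ω) * Real.sign (Y' p.1 p.2 ω) ∂μ =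
      (2 / ((k : ℝ) * ((k : ℝ) - 1))) *
        ∑ p ∈ Finset.univ.filter (fun p : Fin k × Fin k => p.1 < p.2),
          (erf (|Δ p.1 p.2| * Real.sqrt N / (2 * σ))) ^ 2 := by
  have hNpos : (0:ℝ) < N := by exact_mod_cast hN
  set vN : ℝ≥0 := Real.toNNReal (2 * σ ^ 2 / N) with hvN
  have hvcoe : (vN : ℝ) = 2 * σ ^ 2 / N := Real.coe_toNNReal _ (by positivity)
  have hvpos : 0 < (vN : ℝ) := by rw [hvcoe]; positivity
  have hA : Real.sqrt (2 * (vN : ℝ)) = 2 * σ / Real.sqrt N := by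
    have hsq : (2 * σ / Real.sqrt N) ^ 2 = 2 * (vN : ℝ) := by
      rw [hvcoe, div_pow, Real.sq_sqrt hNpos.le]
      ring
    rw [← hsq, Real.sqrt_sq (by positivity)]
  -- integrability
  have hintY : ∀ (Z : Fin k → Fin k → Ω → ℝ) (hZ : ∀ i j, Measurable (Z i j)) (i j : Fin k),
      Integrable (fun ω => Real.sign (Z i j ω)) μ := by
    intro Z hZ i j
    refine Integrable.mono' (integrable_const (1:ℝ))
      ((measurable_sign'.comp (hZ i j)).aestronglyMeasurable)
      (Filter.Eventually.of_forall fun ω => ?_)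
    rw [Real.norm_eq_abs]
    exact abs_sign_le_one _
  have hint : ∀ p ∈ Finset.univ.filter (fun p : Fin k × Fin k => p.1 < p.2),
      Integrable (fun ω => Real.sign (Y p.1 p.2 ω) * Real.sign (Y' p.1 p.2 ω)) μ := by
    intro p _
    refine Integrable.mono' (integrable_const (1:ℝ))
      (((measurable_sign'.comp (hYmeas p.1 p.2)).mul
        (measurable_sign'.comp (hY'meas p.1 p.2))).aestronglyMeasurable)
      (Filter.Eventually.of_forall fun ω => ?_)
    rw [Real.norm_eq_abs, abs_mul]
    exact mul_le_one₀ (abs_sign_le_one _) (abs_nonneg _) (abs_sign_le_one _)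
  rw [integral_const_mul]
  congr 1
  rw [integral_finset_sum _ hint]
  refine Finset.sum_congr rfl fun p hp => ?_
  have hlt : p.1 < p.2 := (Finset.mem_filter.mp hp).2
  -- expected sign of each benchmark
  have hE : ∀ (Z : Fin k → Fin k → Ω → ℝ) (hZm : ∀ i j, Measurable (Z i j))
      (hZ : ∀ i j : Fin k, i < j →
        Measure.map (Z i j) μ = gaussianReal (Δ i j) (Real.toNNReal (2 * σ ^ 2 / N))),
      (∫ ω, Real.sign (Z p.1 p.2 ω) ∂μ) = erf (Δ p.1 p.2 * Real.sqrt N / (2 * σ)) := by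
    intro Z hZm hZ
    have hmap : (∫ ω, Real.sign (Z p.1 p.2 ω) ∂μ)
        = ∫ x, Real.sign x ∂(Measure.map (Z p.1 p.2) μ) :=
      (integral_map (hZm p.1 p.2).aemeasurable measurable_sign'.aestronglyMeasurable).symm
    rw [hmap, hZ p.1 p.2 hlt, integral_sign_gaussian _ _ hvpos, hA]
    congr 1
    rw [div_div_eq_mul_div]
  have hprod : (∫ ω, Real.sign (Y p.1 p.2 ω) * Real.sign (Y' p.1 p.2 ω) ∂μ)
      = (∫ ω, Real.sign (Y p.1 p.2 ω) ∂μ) * ∫ ω, Real.sign (Y' p.1 p.2 ω) ∂μ := by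
    have hind : IndepFun (Real.sign ∘ Y p.1 p.2) (Real.sign ∘ Y' p.1 p.2) μ :=
      (hindep p.1 p.2 hlt).comp measurable_sign' measurable_sign'
    have := hind.integral_mul_eq_mul_integral
      ((measurable_sign'.comp (hYmeas p.1 p.2)).aestronglyMeasurable)
      ((measurable_sign'.comp (hY'meas p.1 p.2)).aestronglyMeasurable)
    simpa [Function.comp] using this
  rw [hprod, hE Y hYmeas hY, hE Y' hY'meas hY']
  have habs : |Δ p.1 p.2| * Real.sqrt N / (2 * σ)
      = |Δ p.1 p.2 * Real.sqrt N / (2 * σ)| := by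
    rw [abs_div, abs_mul, abs_of_nonneg (Real.sqrt_nonneg _),
      abs_of_pos (by positivity : (0:ℝ) < 2 * σ)]
  rw [habs, ← erf_mul_self_abs]
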